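/- arXiv:1808.05675 — 5 statements merged into one kernel-verified Lean document; each statement's English description precedes it below -/
import Mathlib

section
/- Let N ≥ 0 and U ≥ 1 be integers, and let λ_0, …, λ_N be real numbers satisfying λ_n > U · ∑_{k=n+1}^{N} λ_k for every 0 ≤ n ≤ N (so in particular every λ_n > 0). Then for any two count vectors c, c' : {0,…,N} → ℕ with c_k ≤ U and c'_k ≤ U for all k, if there exists an index m such that c_k = c'_k for all k < m and c_m > c'_m, then ∑_{n=0}^{N} λ_n·c_n > ∑_{n=0}^{N} λ_n·c'_n. -/
/-- If the weights satisfy `λ_n > U · ∑_{k=n+1}^N λ_k` for all `n ≤ N`,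
then the weighted sum `∑_{n=0}^N λ_n · c_n` is strictly lexicographically monotone in the
count vector `(c_0, …, c_N)` with entries bounded by `U`. -/
theorem weighted_sum_lex_mono (N U : ℕ) (hU : 1 ≤ U) (lam : ℕ → ℝ)
    (hlam : ∀ n ≤ N, lam n > (U : ℝ) * ∑ k ∈ Finset.Ioc n N, lam k)
    (c c' : ℕ → ℕ) (hc : ∀ k ≤ N, c k ≤ U) (hc' : ∀ k ≤ N, c' k ≤ U)
    (m : ℕ) (hm : m ≤ N) (heq : ∀ k < m, c k = c' k) (hgt : c m > c' m) :
    ∑ n ∈ Finset.range (N + 1), lam n * (c n : ℝ) >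
      ∑ n ∈ Finset.range (N + 1), lam n * (c' n : ℝ) := by
  -- positivity of weights
  have hpos : ∀ j n, n ≤ N → N - n ≤ j → 0 < lam n := by
    intro j
    induction j with
    | zero =>
      intro n hn h0
      have hnN : n = N := by omega
      have h := hlam n hn
      rw [hnN, Finset.Ioc_self, Finset.sum_empty, mul_zero] at h
      rw [hnN]
      exact h
    | succ j ih =>
      intro n hn hj
      have hs : 0 ≤ ∑ k ∈ Finset.Ioc n N, lam k := by
        apply Finset.sum_nonneg
        intro k hk
        rw [Finset.mem_Ioc] at hk
        exact (ih k hk.2 (by omega)).le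
      have h := hlam n hn
      have hU0 : (0:ℝ) ≤ (U:ℝ) := by positivity
      nlinarith
  have hposN : ∀ n, n ≤ N → 0 < lam n := fun n hn => hpos N n hn (by omega)
  rw [gt_iff_lt, ← sub_pos, ← Finset.sum_sub_distrib]
  have hsplit : Finset.range (N + 1) = Finset.Ico 0 m ∪ Finset.Icc m N := by
    rw [Finset.range_eq_Ico, ← Finset.Ico_add_one_right_eq_Icc]
    rw [Finset.Ico_union_Ico_eq_Ico (by omega) (by omega)]
  rw [hsplit, Finset.sum_union]
  · have h1 : ∑ n ∈ Finset.Ico 0 m, (lam n * (c n : ℝ) - lam n * (c' n : ℝ)) = 0 := by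
      apply Finset.sum_eq_zero
      intro n hn
      rw [Finset.mem_Ico] at hn
      rw [heq n hn.2]
      ring
    rw [h1, zero_add]
    rw [Finset.Icc_eq_cons_Ioc hm, Finset.sum_cons]
    have hmain : lam m ≤ lam m * (c m : ℝ) - lam m * (c' m : ℝ) := by
      have h1 : (1:ℝ) ≤ (c m : ℝ) - (c' m : ℝ) := by
        have h2 : ((c' m : ℝ) + 1) ≤ (c m : ℝ) := by exact_mod_cast hgt
        linarith
      nlinarith [hposN m hm]
    have htail : -((U:ℝ) * ∑ k ∈ Finset.Ioc m N, lam k) ≤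
        ∑ n ∈ Finset.Ioc m N, (lam n * (c n : ℝ) - lam n * (c' n : ℝ)) := by
      rw [Finset.mul_sum, ← Finset.sum_neg_distrib]
      apply Finset.sum_le_sum
      intro n hn
      rw [Finset.mem_Ioc] at hn
      have hp := hposN n hn.2
      have hcn : (0:ℝ) ≤ (c n : ℝ) := by positivity
      have hc'n : (c' n : ℝ) ≤ (U:ℝ) := by exact_mod_cast hc' n hn.2
      nlinarith
    have := hlam m hm
    linarith
  · rw [Finset.disjoint_left]
    intro a ha hb
    rw [Finset.mem_Ico] at ha
    rw [Finset.mem_Icc] at hb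
    omega
end

section
/- Let U ≥ 1, N ≥ 0, and fix constants B > 0, P_max > 0, N₀ > 0, γ ∈ (0,1], channel gains H_1, …, H_U > 0, and video rates r_0, …, r_N > 0. Call (b, p) ∈ (ℝ_{≥0})^U × (ℝ_{≥0})^U a feasible allocation if ∑_{u=1}^U b_u ≤ B and ∑_{u=1}^U p_u ≤ P_max, and define its induced indicators by I_0^u = 1 if b_u·log₂(1 + γ·p_u·H_u/(N₀·b_u)) ≥ r_0 (with the capacity taken to be 0 when b_u = 0) and I_0^u = 0 otherwise, and I_n^u = I_{n−1}^u · 1[b_u·log₂(1 + γ·p_u·H_u/(N₀·b_u)) ≥ r_n] for 1 ≤ n ≤ N; its count vector is c_n = ∑_{u=1}^U I_n^u. Suppose the weights satisfy λ_n > U·∑_{k=n+1}^N λ_k for all n. If (b*, p*) is a feasible allocation whose count vector c* lexicographically dominates the count vector of every feasible allocation (i.e., for every feasible (b,p) with count vector c, either c* = c or at the smallest index m where they differ one has c*_m > c_m), then (b*, p*) attains the maximum of ∑_{n=0}^N λ_n·c_n over all feasible allocations. -/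
/-- Shannon capacity of a user with channel gain `H` allocated bandwidth `b` and power
`p` (taken to be `0` when `b = 0`): `b · log₂(1 + γ·p·H/(N₀·b))`. -/
noncomputable def shannonCap (γ N0 H b p : ℝ) : ℝ :=
  if b = 0 then 0 else b * Real.logb 2 (1 + γ * p * H / (N0 * b))

open Classical in
/-- The candidacy indicator of a user with gain `H` and allocation `(b, p)` at rate
level `n`: `I 0 = 1` iff the capacity is at least `r 0`, and
`I (n+1) = I n · 1[capacity ≥ r (n+1)]`. -/
noncomputable def rateInd (γ N0 H : ℝ) (r : ℕ → ℝ) (b p : ℝ) : ℕ → ℕ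
  | 0 => if shannonCap γ N0 H b p ≥ r 0 then 1 else 0
  | n + 1 => rateInd γ N0 H r b p n * (if shannonCap γ N0 H b p ≥ r (n + 1) then 1 else 0)

/-- The count vector: `c n` is the number of users that are candidates for rate level `n`. -/
noncomputable def rateCount {U : ℕ} (γ N0 : ℝ) (H : Fin U → ℝ) (r : ℕ → ℝ)
    (b p : Fin U → ℝ) (n : ℕ) : ℕ :=
  ∑ u, rateInd γ N0 (H u) r (b u) (p u) n

/-- A feasible allocation: nonnegative per-user bandwidths and powers whose totals
respect the bandwidth budget `B` and power budget `Pmax`. -/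
def FeasibleAlloc {U : ℕ} (B Pmax : ℝ) (b p : Fin U → ℝ) : Prop :=
  (∀ u, 0 ≤ b u) ∧ (∀ u, 0 ≤ p u) ∧ (∑ u, b u ≤ B) ∧ (∑ u, p u ≤ Pmax)


lemma rateInd_le_one (γ N0 H : ℝ) (r : ℕ → ℝ) (b p : ℝ) :
    ∀ n, rateInd γ N0 H r b p n ≤ 1
  | 0 => by unfold rateInd; split <;> simp
  | n + 1 => by
      have ih := rateInd_le_one γ N0 H r b p n
      unfold rateInd
      split <;> simp <;> omega

lemma rateCount_le_card {U : ℕ} (γ N0 : ℝ) (H : Fin U → ℝ) (r : ℕ → ℝ)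
    (b p : Fin U → ℝ) (n : ℕ) : rateCount γ N0 H r b p n ≤ U := by
  unfold rateCount
  calc ∑ u, rateInd γ N0 (H u) r (b u) (p u) n ≤ ∑ _u : Fin U, 1 :=
        Finset.sum_le_sum fun u _ => rateInd_le_one _ _ _ _ _ _ n
    _ = U := by simp

/-- under the weight condition `λ_n > U·∑_{k=n+1}^N λ_k`, a feasible
allocation whose count vector lexicographically dominates the count vector of every
feasible allocation maximizes the QoE objective `∑_{n=0}^N λ_n · c_n` over all
feasible allocations. -/
theorem lexDominant_is_optimal (U N : ℕ) (hU : 1 ≤ U)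
    (B Pmax N0 γ : ℝ) (hB : 0 < B) (hP : 0 < Pmax) (hN0 : 0 < N0)
    (hγ : γ ∈ Set.Ioc (0 : ℝ) 1)
    (H : Fin U → ℝ) (hH : ∀ u, 0 < H u)
    (r : ℕ → ℝ) (hr : ∀ n ≤ N, 0 < r n)
    (lam : ℕ → ℝ) (hlam : ∀ n ≤ N, lam n > (U : ℝ) * ∑ k ∈ Finset.Ioc n N, lam k)
    (bstar pstar : Fin U → ℝ) (hstar : FeasibleAlloc B Pmax bstar pstar)
    (hdom : ∀ b p : Fin U → ℝ, FeasibleAlloc B Pmax b p →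
      (∀ n ≤ N, rateCount γ N0 H r bstar pstar n = rateCount γ N0 H r b p n) ∨
      (∃ m ≤ N, (∀ k < m, rateCount γ N0 H r bstar pstar k = rateCount γ N0 H r b p k) ∧
        rateCount γ N0 H r b p m < rateCount γ N0 H r bstar pstar m)) :
    ∀ b p : Fin U → ℝ, FeasibleAlloc B Pmax b p →
      ∑ n ∈ Finset.range (N + 1), lam n * (rateCount γ N0 H r b p n : ℝ) ≤
        ∑ n ∈ Finset.range (N + 1), lam n * (rateCount γ N0 H r bstar pstar n : ℝ) := by
  intro b p hfeas
  rcases hdom b p hfeas with heq | ⟨m, hmN, hpre, hlt⟩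
  · apply le_of_eq
    refine Finset.sum_congr rfl fun n hn => ?_
    rw [heq n (Nat.lt_succ_iff.mp (Finset.mem_range.mp hn))]
  · -- positivity of weights
    have hpos : ∀ n ≤ N, 0 < lam n := by
      have key : ∀ d n, n ≤ N → N - n ≤ d → 0 < lam n := by
        intro d
        induction d with
        | zero =>
          intro n hn h0
          have hnN : n = N := by omega
          simpa [hnN] using hlam n hn
        | succ d ih =>
          intro n hn hd
          have hsum : 0 ≤ ∑ k ∈ Finset.Ioc n N, lam k :=
            Finset.sum_nonneg fun k hk => by
              have hk' := Finset.mem_Ioc.mp hk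
              exact (ih k hk'.2 (by omega)).le
          have h := hlam n hn
          have hU' : (0:ℝ) ≤ (U:ℝ) := Nat.cast_nonneg U
          nlinarith
      intro n hn; exact key (N - n) n hn le_rfl
    set cs : ℕ → ℝ := fun n => (rateCount γ N0 H r bstar pstar n : ℝ) with hcs
    set cb : ℕ → ℝ := fun n => (rateCount γ N0 H r b p n : ℝ) with hcb
    rw [← sub_nonneg, ← Finset.sum_sub_distrib]
    have hrw : ∀ n, lam n * cs n - lam n * cb n = lam n * (cs n - cb n) := by
      intro n; ring
    change 0 ≤ ∑ n ∈ Finset.range (N + 1), (lam n * cs n - lam n * cb n)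
    simp only [hrw]
    have hsubset : Finset.Icc m N ⊆ Finset.range (N + 1) := by
      intro n hn
      have := Finset.mem_Icc.mp hn
      exact Finset.mem_range.mpr (by omega)
    have hzero : ∀ n ∈ Finset.range (N + 1), n ∉ Finset.Icc m N →
        lam n * (cs n - cb n) = 0 := by
      intro n hn hn'
      have h1 := Finset.mem_range.mp hn
      have h2 : n < m := by
        rcases Nat.lt_or_ge n m with h | h
        · exact h
        · exact absurd (Finset.mem_Icc.mpr ⟨h, by omega⟩) hn'
      have := hpre n h2
      simp [hcs, hcb, this]
    rw [← Finset.sum_subset hsubset hzero, Finset.Icc_eq_cons_Ioc hmN,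
      Finset.sum_cons]
    have hm1 : lam m ≤ lam m * (cs m - cb m) := by
      have h1 : cb m + 1 ≤ cs m := by
        have h := hlt
        simp only [hcs, hcb]
        exact_mod_cast h
      nlinarith [hpos m hmN]
    have hrest : ∀ n ∈ Finset.Ioc m N,
        -(lam n * (U:ℝ)) ≤ lam n * (cs n - cb n) := by
      intro n hn
      have hn' := Finset.mem_Ioc.mp hn
      have hln := hpos n hn'.2
      have h1 : cb n ≤ (U:ℝ) := by
        simp only [hcb]
        exact_mod_cast rateCount_le_card γ N0 H r b p n
      have h2 : (0:ℝ) ≤ cs n := Nat.cast_nonneg _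
      nlinarith
    have hsum2 : ∑ n ∈ Finset.Ioc m N, -(lam n * (U:ℝ)) ≤
        ∑ n ∈ Finset.Ioc m N, lam n * (cs n - cb n) :=
      Finset.sum_le_sum hrest
    have hkey := hlam m hmN
    have : ∑ n ∈ Finset.Ioc m N, -(lam n * (U:ℝ)) =
        -((U:ℝ) * ∑ n ∈ Finset.Ioc m N, lam n) := by
      rw [Finset.mul_sum, ← Finset.sum_neg_distrib]
      exact Finset.sum_congr rfl fun n _ => by ring
    nlinarith
end

section
/- For all reals r > ρ ≥ 0, the function b ↦ b·(2^{r/b} − 2^{ρ/b}) is strictly decreasing on (0, ∞). -/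
open Real Set

private lemma deriv_exp_mul (c : ℝ) :
    deriv (fun t : ℝ => Real.exp (c * t)) = fun t => c * Real.exp (c * t) := by
  funext t
  have h : HasDerivAt (fun t : ℝ => Real.exp (c * t)) (Real.exp (c * t) * c) t := by
    simpa using ((hasDerivAt_id t).const_mul c).exp
  rw [h.deriv]; ring

private lemma phi_strictConvex (r ρ : ℝ) (hρ : 0 ≤ ρ) (hr : ρ < r) :
    StrictConvexOn ℝ (Set.Ici (0:ℝ))
      (fun t : ℝ => Real.exp (Real.log 2 * r * t) - Real.exp (Real.log 2 * ρ * t)) := by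
  have hlog : 0 < Real.log 2 := Real.log_pos (by norm_num)
  have hr0 : 0 < r := lt_of_le_of_lt hρ hr
  apply strictConvexOn_of_deriv2_pos (convex_Ici 0)
  · exact ((Real.continuous_exp.comp (continuous_const.mul continuous_id)).sub
      (Real.continuous_exp.comp (continuous_const.mul continuous_id))).continuousOn
  · intro x hx
    rw [interior_Ici] at hx
    have hx0 : (0:ℝ) < x := hx
    have hd1 : deriv (fun t : ℝ => Real.exp (Real.log 2 * r * t)
        - Real.exp (Real.log 2 * ρ * t))
        = fun t => Real.log 2 * r * Real.exp (Real.log 2 * r * t)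
          - Real.log 2 * ρ * Real.exp (Real.log 2 * ρ * t) := by
      funext t
      have h1 : HasDerivAt (fun t : ℝ => Real.exp (Real.log 2 * r * t))
          (Real.exp (Real.log 2 * r * t) * (Real.log 2 * r)) t := by
        simpa using ((hasDerivAt_id t).const_mul (Real.log 2 * r)).exp
      have h2 : HasDerivAt (fun t : ℝ => Real.exp (Real.log 2 * ρ * t))
          (Real.exp (Real.log 2 * ρ * t) * (Real.log 2 * ρ)) t := by
        simpa using ((hasDerivAt_id t).const_mul (Real.log 2 * ρ)).exp
      exact (h1.sub h2).deriv.trans (by ring)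
    have hd2 : (deriv^[2] (fun t : ℝ => Real.exp (Real.log 2 * r * t)
        - Real.exp (Real.log 2 * ρ * t))) x
        = Real.log 2 * r * (Real.log 2 * r * Real.exp (Real.log 2 * r * x))
          - Real.log 2 * ρ * (Real.log 2 * ρ * Real.exp (Real.log 2 * ρ * x)) := by
      rw [Function.iterate_succ, Function.iterate_one, Function.comp_apply, hd1]
      have h1 : HasDerivAt (fun t : ℝ => Real.exp (Real.log 2 * r * t))
          (Real.exp (Real.log 2 * r * x) * (Real.log 2 * r)) x := by
        simpa using ((hasDerivAt_id x).const_mul (Real.log 2 * r)).exp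
      have h2 : HasDerivAt (fun t : ℝ => Real.exp (Real.log 2 * ρ * t))
          (Real.exp (Real.log 2 * ρ * x) * (Real.log 2 * ρ)) x := by
        simpa using ((hasDerivAt_id x).const_mul (Real.log 2 * ρ)).exp
      exact ((h1.const_mul (Real.log 2 * r)).sub (h2.const_mul (Real.log 2 * ρ))).deriv.trans (by ring)
    rw [hd2]
    have key : Real.log 2 * ρ * (Real.log 2 * ρ * Real.exp (Real.log 2 * ρ * x))
        < Real.log 2 * r * (Real.log 2 * r * Real.exp (Real.log 2 * r * x)) := by
      rcases eq_or_lt_of_le hρ with h0 | h0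
      · rw [← h0]
        simp only [mul_zero, zero_mul]
        positivity
      · have e1 : Real.exp (Real.log 2 * ρ * x) ≤ Real.exp (Real.log 2 * r * x) :=
          Real.exp_le_exp.2 (by nlinarith [mul_pos (mul_pos hlog hx0) (sub_pos.2 hr)])
        have e2 : 0 < Real.exp (Real.log 2 * ρ * x) := Real.exp_pos _
        have e3 : 0 < Real.exp (Real.log 2 * r * x) := Real.exp_pos _
        have hρr : ρ * ρ < r * r := by nlinarith
        have h3 : ρ * ρ * Real.exp (Real.log 2 * ρ * x)
            < r * r * Real.exp (Real.log 2 * r * x) := by nlinarith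
        nlinarith [mul_lt_mul_of_pos_left h3 (mul_pos hlog hlog)]
    linarith

/-- For all reals `r > ρ ≥ 0`, the function `b ↦ b·(2^{r/b} − 2^{ρ/b})`
is strictly decreasing on `(0, ∞)`. -/
theorem upgradePower_strictAnti_bandwidth (r ρ : ℝ) (hρ : 0 ≤ ρ) (hr : ρ < r) :
    StrictAntiOn (fun b : ℝ => b * ((2 : ℝ) ^ (r / b) - (2 : ℝ) ^ (ρ / b))) (Set.Ioi 0) := by
  set φ : ℝ → ℝ := fun t => Real.exp (Real.log 2 * r * t) - Real.exp (Real.log 2 * ρ * t) with hφ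
  have hconv := phi_strictConvex r ρ hρ hr
  intro b1 hb1 b2 hb2 hlt
  simp only [Set.mem_Ioi] at hb1 hb2
  have hb2' : (0:ℝ) < b2 := hb2
  have hrw : ∀ b : ℝ, 0 < b → b * ((2 : ℝ) ^ (r / b) - (2 : ℝ) ^ (ρ / b)) = b * φ b⁻¹ := by
    intro b hb
    rw [hφ]
    rw [Real.rpow_def_of_pos (by norm_num : (0:ℝ) < 2),
        Real.rpow_def_of_pos (by norm_num : (0:ℝ) < 2)]
    ring_nf
  show b2 * ((2 : ℝ) ^ (r / b2) - (2 : ℝ) ^ (ρ / b2))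
      < b1 * ((2 : ℝ) ^ (r / b1) - (2 : ℝ) ^ (ρ / b1))
  rw [hrw b1 hb1, hrw b2 hb2]
  -- apply strict convexity at points 0 and b1⁻¹ with weight b1/b2
  have ht1 : (0:ℝ) < b1⁻¹ := inv_pos.2 hb1
  have ht2 : (0:ℝ) < b2⁻¹ := inv_pos.2 hb2
  have hne : (0:ℝ) ≠ b1⁻¹ := ne_of_lt ht1
  have ha : 0 < 1 - b1 / b2 := by
    have : b1 / b2 < 1 := (div_lt_one hb2).2 hlt
    linarith
  have hb : 0 < b1 / b2 := div_pos hb1 hb2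
  have hkey := hconv.2 (Set.self_mem_Ici) (Set.mem_Ici.2 (le_of_lt ht1)) hne ha hb (by ring)
  have heq : (1 - b1 / b2) • (0:ℝ) + (b1 / b2) • b1⁻¹ = b2⁻¹ := by
    rw [smul_eq_mul, smul_eq_mul, mul_zero, zero_add, div_mul_eq_mul_div, mul_inv_cancel₀ hb1.ne', one_div]
  rw [heq] at hkey
  have : φ b2⁻¹ < (b1 / b2) * φ b1⁻¹ := by
    simpa [hφ, smul_eq_mul, mul_zero, Real.exp_zero] using hkey
  calc b2 * φ b2⁻¹ < b2 * ((b1 / b2) * φ b1⁻¹) := by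
        exact (mul_lt_mul_iff_right₀ hb2).2 this
    _ = b1 * φ b1⁻¹ := by field_simp
end

section
/- Let H_u ≥ H_v > 0 be channel gains, r ≥ ρ ≥ 0 rates, b > 0 a common bandwidth, and N₀ > 0, γ ∈ (0,1]. Suppose powers p_v, p_u ≥ 0 satisfy b·log₂(1 + γ·p_v·H_v/(N₀·b)) ≥ r and b·log₂(1 + γ·p_u·H_u/(N₀·b)) ≥ ρ. Then there exist powers p'_u, p'_v ≥ 0 with p'_u + p'_v ≤ p_u + p_v such that b·log₂(1 + γ·p'_u·H_u/(N₀·b)) ≥ r and b·log₂(1 + γ·p'_v·H_v/(N₀·b)) ≥ ρ. -/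
private lemma cap_lb {b x s : ℝ} (hb : 0 < b) (hx : 0 ≤ x)
    (h : b * Real.logb 2 (1 + x) ≥ s) : (2 : ℝ) ^ (s / b) - 1 ≤ x := by
  have h1 : Real.logb 2 (1 + x) ≥ s / b := by
    rw [ge_iff_le, div_le_iff₀ hb, mul_comm]; exact h
  have hpos : (0 : ℝ) < 1 + x := by linarith
  have : (2 : ℝ) ^ (s / b) ≤ (2 : ℝ) ^ Real.logb 2 (1 + x) :=
    Real.rpow_le_rpow_left_iff (x := (2:ℝ)) one_lt_two |>.mpr h1
  rw [Real.rpow_logb two_pos (by norm_num) hpos] at this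
  linarith

private lemma cap_eq {b s : ℝ} (hb : 0 < b) :
    b * Real.logb 2 (1 + ((2 : ℝ) ^ (s / b) - 1)) = s := by
  have h : (1 : ℝ) + ((2 : ℝ) ^ (s / b) - 1) = (2 : ℝ) ^ (s / b) := by ring
  rw [h, Real.logb_rpow two_pos (by norm_num)]
  field_simp

/-- exchange lemma: If a lower-gain user `v` achieves rate `r` and a
higher-gain user `u` achieves rate `ρ ≤ r` on a common bandwidth `b`, then the rate
assignments can be swapped without increasing the total power. -/
theorem exchange_lemma (Hu Hv r ρ b N0 γ pu pv : ℝ)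
    (hHv : 0 < Hv) (hHuv : Hv ≤ Hu) (hρ : 0 ≤ ρ) (hrρ : ρ ≤ r) (hb : 0 < b)
    (hN0 : 0 < N0) (hγ : γ ∈ Set.Ioc (0 : ℝ) 1) (hpv : 0 ≤ pv) (hpu : 0 ≤ pu)
    (hv : b * Real.logb 2 (1 + γ * pv * Hv / (N0 * b)) ≥ r)
    (hu : b * Real.logb 2 (1 + γ * pu * Hu / (N0 * b)) ≥ ρ) :
    ∃ pu' pv' : ℝ, 0 ≤ pu' ∧ 0 ≤ pv' ∧ pu' + pv' ≤ pu + pv ∧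
      b * Real.logb 2 (1 + γ * pu' * Hu / (N0 * b)) ≥ r ∧
      b * Real.logb 2 (1 + γ * pv' * Hv / (N0 * b)) ≥ ρ := by
  obtain ⟨hγ0, hγ1⟩ := hγ
  have hHu : 0 < Hu := lt_of_lt_of_le hHv hHuv
  have hc : 0 < N0 * b := mul_pos hN0 hb
  set A : ℝ := ((2 : ℝ) ^ (r / b) - 1) * (N0 * b) / γ with hA
  set B : ℝ := ((2 : ℝ) ^ (ρ / b) - 1) * (N0 * b) / γ with hB
  have hr0 : 0 ≤ r := le_trans hρ hrρ
  have hAr : 0 ≤ (2 : ℝ) ^ (r / b) - 1 := by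
    have : (1:ℝ) ≤ (2:ℝ) ^ (r / b) :=
      Real.one_le_rpow one_le_two (div_nonneg hr0 hb.le)
    linarith
  have hBr : 0 ≤ (2 : ℝ) ^ (ρ / b) - 1 := by
    have : (1:ℝ) ≤ (2:ℝ) ^ (ρ / b) :=
      Real.one_le_rpow one_le_two (div_nonneg hρ hb.le)
    linarith
  have hA0 : 0 ≤ A := by positivity
  have hB0 : 0 ≤ B := by positivity
  have hBA : B ≤ A := by
    have hrp : (2:ℝ) ^ (ρ / b) ≤ (2:ℝ) ^ (r / b) :=
      Real.rpow_le_rpow_left_iff one_lt_two |>.mpr (by gcongr)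
    rw [hA, hB]
    gcongr
  have hxv : 0 ≤ γ * pv * Hv / (N0 * b) := by positivity
  have hxu : 0 ≤ γ * pu * Hu / (N0 * b) := by positivity
  have h1 := (le_div_iff₀ hc).mp (cap_lb hb hxv hv)
  have h2 := (le_div_iff₀ hc).mp (cap_lb hb hxu hu)
  have hpvA : A / Hv ≤ pv := by
    rw [hA, div_le_iff₀ hHv, div_le_iff₀ hγ0]
    nlinarith
  have hpuB : B / Hu ≤ pu := by
    rw [hB, div_le_iff₀ hHu, div_le_iff₀ hγ0]
    nlinarith
  refine ⟨A / Hu, B / Hv, by positivity, by positivity, ?_, ?_, ?_⟩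
  · have key : A / Hu + B / Hv ≤ A / Hv + B / Hu := by
      rw [div_add_div _ _ (ne_of_gt hHu) (ne_of_gt hHv),
          div_add_div _ _ (ne_of_gt hHv) (ne_of_gt hHu),
          div_le_div_iff₀ (by positivity) (by positivity)]
      nlinarith [mul_nonneg (mul_nonneg (mul_pos hHu hHv).le (sub_nonneg.mpr hBA))
        (sub_nonneg.mpr hHuv)]
    linarith
  · have h : γ * (A / Hu) * Hu / (N0 * b) = (2:ℝ) ^ (r / b) - 1 := by
      rw [hA]; field_simp
    rw [h, cap_eq hb]
  · have h : γ * (B / Hv) * Hv / (N0 * b) = (2:ℝ) ^ (ρ / b) - 1 := by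
      rw [hB]; field_simp
    rw [h, cap_eq hb]
end

section
/- Fix B > 0, P_max > 0, N₀ > 0, γ ∈ (0,1], a rate r_0 > 0, and channel gains H_1, …, H_U > 0 with H_1 ≥ H_u for all u. If B·log₂(1 + γ·P_max·H_1/(N₀·B)) < r_0, then for every allocation (b, p) ∈ (ℝ_{≥0})^U × (ℝ_{≥0})^U with ∑_{u=1}^U b_u ≤ B and ∑_{u=1}^U p_u ≤ P_max, every user u with b_u > 0 satisfies b_u·log₂(1 + γ·p_u·H_u/(N₀·b_u)) < r_0. -/
/-- Key monotonicity: `x ↦ x * log (1 + d/x)` is monotone on positives. -/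
lemma aux_mono_log (d x X : ℝ) (hd : 0 ≤ d) (hx : 0 < x) (hX : x ≤ X) :
    x * Real.log (1 + d / x) ≤ X * Real.log (1 + d / X) := by
  have hX0 : 0 < X := hx.trans_le hX
  have ht0 : (0:ℝ) < x / X := by positivity
  have ht1 : x / X ≤ 1 := div_le_one_of_le₀ hX hX0.le
  have hy : (0:ℝ) < 1 + d / x := by positivity
  have key := (strictConcaveOn_log_Ioi.concaveOn).2 (Set.mem_Ioi.mpr one_pos)
      (Set.mem_Ioi.mpr hy) (by linarith : (0:ℝ) ≤ 1 - x / X) ht0.le (by ring)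
  simp only [smul_eq_mul, Real.log_one, mul_zero] at key
  have heq : (1 - x / X) * 1 + x / X * (1 + d / x) = 1 + d / X := by
    field_simp
    ring
  rw [heq] at key
  have := mul_le_mul_of_nonneg_left key hX0.le
  calc x * Real.log (1 + d / x) = X * (0 + x / X * Real.log (1 + d / x)) := by
        field_simp
        ring
    _ ≤ X * Real.log (1 + d / X) := this

/-- termination criterion: if the highest-gain user cannot reach the
base rate `r₀` when given the entire bandwidth and power budget, then under any
feasible allocation no user reaches `r₀`. -/
theorem no_user_reaches_base_rate (U : ℕ) (B Pmax N0 γ r0 : ℝ)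
    (hB : 0 < B) (hP : 0 < Pmax) (hN0 : 0 < N0) (hγ : γ ∈ Set.Ioc (0 : ℝ) 1)
    (hr0 : 0 < r0) (H : Fin U → ℝ) (hHpos : ∀ u, 0 < H u) (u1 : Fin U)
    (hmax : ∀ u, H u ≤ H u1)
    (hfail : B * Real.logb 2 (1 + γ * Pmax * H u1 / (N0 * B)) < r0)
    (b p : Fin U → ℝ) (hb : ∀ u, 0 ≤ b u) (hp : ∀ u, 0 ≤ p u)
    (hbB : ∑ u, b u ≤ B) (hpP : ∑ u, p u ≤ Pmax) :
    ∀ u, 0 < b u → b u * Real.logb 2 (1 + γ * p u * H u / (N0 * b u)) < r0 := by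
  intro u hbu
  obtain ⟨hγ0, hγ1⟩ := hγ
  have hbuB : b u ≤ B :=
    le_trans (Finset.single_le_sum (fun i _ => hb i) (Finset.mem_univ u)) hbB
  have hpu : p u ≤ Pmax :=
    le_trans (Finset.single_le_sum (fun i _ => hp i) (Finset.mem_univ u)) hpP
  have hcC : γ * p u * H u ≤ γ * Pmax * H u1 := by
    apply mul_le_mul (mul_le_mul le_rfl hpu (hp u) hγ0.le) (hmax u) (hHpos u).le
    positivity
  have hc0 : 0 ≤ γ * p u * H u := by
    have := (hp u); have := (hHpos u).le; positivity
  have hlog2 : (0:ℝ) < Real.log 2 := Real.log_pos (by norm_num)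
  -- step 1: monotone in bandwidth
  have h1 : b u * Real.log (1 + γ * p u * H u / (N0 * b u)) ≤
      B * Real.log (1 + γ * p u * H u / (N0 * B)) := by
    have e1 : γ * p u * H u / (N0 * b u) = (γ * p u * H u / N0) / b u := by
      rw [div_div]
    have e2 : γ * p u * H u / (N0 * B) = (γ * p u * H u / N0) / B := by
      rw [div_div]
    rw [e1, e2]
    exact aux_mono_log _ _ _ (by positivity) hbu hbuB
  -- step 2: monotone in numerator
  have h2 : B * Real.log (1 + γ * p u * H u / (N0 * B)) ≤
      B * Real.log (1 + γ * Pmax * H u1 / (N0 * B)) := by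
    apply mul_le_mul_of_nonneg_left _ hB.le
    apply Real.log_le_log (by positivity)
    have : γ * p u * H u / (N0 * B) ≤ γ * Pmax * H u1 / (N0 * B) :=
      div_le_div_of_nonneg_right hcC (by positivity) |>.trans_eq rfl
    linarith
  calc b u * Real.logb 2 (1 + γ * p u * H u / (N0 * b u))
      = b u * Real.log (1 + γ * p u * H u / (N0 * b u)) / Real.log 2 := by
        rw [Real.logb]; ring
    _ ≤ B * Real.log (1 + γ * Pmax * H u1 / (N0 * B)) / Real.log 2 := by
        exact div_le_div_of_nonneg_right (h1.trans h2) hlog2.le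
    _ = B * Real.logb 2 (1 + γ * Pmax * H u1 / (N0 * B)) := by
        rw [Real.logb]; ring
    _ < r0 := hfail
end
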